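/- Let s_1, s_2, s_3 ∈ ℂ with Re s_1 > 3, Re s_2 > 3, Re s_3 > 3, and write Z(a,b,c) = ∑_{m≥1}∑_{n≥1} m^{−a} n^{−b} (m+n)^{−c}. Then (s_3(s_3+1) − 2s_1 s_3 − 2s_2 s_3 + 2s_1 s_2)·Z(s_1,s_2,s_3) + s_3(s_1+2s_2−2s_3−2)·Z(s_1−1,s_2,s_3+1) + s_3(2s_1+s_2−2s_3−2)·Z(s_1,s_2−1,s_3+1) + s_1 s_3·Z(s_1+1,s_2−2,s_3+1) + s_2 s_3·Z(s_1−2,s_2+1,s_3+1) + s_1(s_2−2s_3)·Z(s_1+1,s_2−1,s_3) + s_2(s_1−2s_3)·Z(s_1−1,s_2+1,s_3) − s_1(2s_2−s_3)·Z(s_1+1,s_2,s_3−1) − s_2(2s_1−s_3)·Z(s_1,s_2+1,s_3−1) + s_3(s_3+1)·Z(s_1−2,s_2,s_3+2) + s_3(s_3+1)·Z(s_1,s_2−2,s_3+2) + s_1 s_2·Z(s_1+1,s_2+1,s_3−2) + 2s_3(s_3+1)·Z(s_1−1,s_2−1,s_3+2) = 0. (Identity (4.6) for the Mordell–Tornheim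 double zeta-function, arising from the coefficient of ab in the generating function of Example 4.2.) -/

import Mathlib

open Complex

lemma e0 (x s : ℂ) (hx : x ≠ 0) : x ^ (-s) = x ^ (-(s + 1)) * x := by
  rw [show -s = -(s + 1) + 1 by ring, cpow_add _ _ hx, cpow_one]

lemma e1 (x s : ℂ) (hx : x ≠ 0) : x ^ (-(s - 1)) = x ^ (-(s + 1)) * x ^ 2 := by
  rw [show -(s - 1) = -(s + 1) + ((2 : ℕ) : ℂ) by push_cast; ring, cpow_add _ _ hx, cpow_natCast]

lemma e2 (x s : ℂ) (hx : x ≠ 0) : x ^ (-(s - 2)) = x ^ (-(s + 1)) * x ^ 3 := by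
  rw [show -(s - 2) = -(s + 1) + ((3 : ℕ) : ℂ) by push_cast; ring, cpow_add _ _ hx, cpow_natCast]

lemma f0 (x s : ℂ) (hx : x ≠ 0) : x ^ (-s) = x ^ (-(s + 2)) * x ^ 2 := by
  rw [show -s = -(s + 2) + ((2 : ℕ) : ℂ) by push_cast; ring, cpow_add _ _ hx, cpow_natCast]

lemma f1 (x s : ℂ) (hx : x ≠ 0) : x ^ (-(s + 1)) = x ^ (-(s + 2)) * x := by
  rw [show -(s + 1) = -(s + 2) + 1 by ring, cpow_add _ _ hx, cpow_one]

lemma f2 (x s : ℂ) (hx : x ≠ 0) : x ^ (-(s - 1)) = x ^ (-(s + 2)) * x ^ 3 := by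
  rw [show -(s - 1) = -(s + 2) + ((3 : ℕ) : ℂ) by push_cast; ring, cpow_add _ _ hx, cpow_natCast]

lemma f3 (x s : ℂ) (hx : x ≠ 0) : x ^ (-(s - 2)) = x ^ (-(s + 2)) * x ^ 4 := by
  rw [show -(s - 2) = -(s + 2) + ((4 : ℕ) : ℂ) by push_cast; ring, cpow_add _ _ hx, cpow_natCast]

lemma key (s₁ s₂ s₃ x y : ℂ) (hx : x ≠ 0) (hy : y ≠ 0) (hz : x + y ≠ 0) :
      (s₃ * (s₃ + 1) - 2 * s₁ * s₃ - 2 * s₂ * s₃ + 2 * s₁ * s₂) * (x ^ (-(s₁)) * y ^ (-(s₂)) * (x + y) ^ (-(s₃)))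
      + s₃ * (s₁ + 2 * s₂ - 2 * s₃ - 2) * (x ^ (-(s₁ - 1)) * y ^ (-(s₂)) * (x + y) ^ (-(s₃ + 1)))
      + s₃ * (2 * s₁ + s₂ - 2 * s₃ - 2) * (x ^ (-(s₁)) * y ^ (-(s₂ - 1)) * (x + y) ^ (-(s₃ + 1)))
      + s₁ * s₃ * (x ^ (-(s₁ + 1)) * y ^ (-(s₂ - 2)) * (x + y) ^ (-(s₃ + 1)))
      + s₂ * s₃ * (x ^ (-(s₁ - 2)) * y ^ (-(s₂ + 1)) * (x + y) ^ (-(s₃ + 1)))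
      + s₁ * (s₂ - 2 * s₃) * (x ^ (-(s₁ + 1)) * y ^ (-(s₂ - 1)) * (x + y) ^ (-(s₃)))
      + s₂ * (s₁ - 2 * s₃) * (x ^ (-(s₁ - 1)) * y ^ (-(s₂ + 1)) * (x + y) ^ (-(s₃)))
      - s₁ * (2 * s₂ - s₃) * (x ^ (-(s₁ + 1)) * y ^ (-(s₂)) * (x + y) ^ (-(s₃ - 1)))
      - s₂ * (2 * s₁ - s₃) * (x ^ (-(s₁)) * y ^ (-(s₂ + 1)) * (x + y) ^ (-(s₃ - 1)))
      + s₃ * (s₃ + 1) * (x ^ (-(s₁ - 2)) * y ^ (-(s₂)) * (x + y) ^ (-(s₃ + 2)))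
      + s₃ * (s₃ + 1) * (x ^ (-(s₁)) * y ^ (-(s₂ - 2)) * (x + y) ^ (-(s₃ + 2)))
      + s₁ * s₂ * (x ^ (-(s₁ + 1)) * y ^ (-(s₂ + 1)) * (x + y) ^ (-(s₃ - 2)))
      + 2 * s₃ * (s₃ + 1) * (x ^ (-(s₁ - 1)) * y ^ (-(s₂ - 1)) * (x + y) ^ (-(s₃ + 2)))
      = 0 := by
  simp only [e0 x s₁ hx, e1 x s₁ hx, e2 x s₁ hx,
    e0 y s₂ hy, e1 y s₂ hy, e2 y s₂ hy,
    f0 (x + y) s₃ hz, f1 (x + y) s₃ hz, f2 (x + y) s₃ hz, f3 (x + y) s₃ hz]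
  ring

lemma MT_summable {a b c : ℂ} (ha : 1 < a.re) (hb : 1 < b.re) (hc : 0 < c.re) :
    Summable (fun p : ℕ × ℕ =>
      ((p.1 : ℂ) + 1) ^ (-a) * ((p.2 : ℂ) + 1) ^ (-b) *
        ((p.1 : ℂ) + (p.2 : ℂ) + 2) ^ (-c)) := by
  apply Summable.of_norm
  have hA : Summable (fun m : ℕ => ((m : ℝ) + 1) ^ (-a.re)) := by
    have h := ((Real.summable_nat_rpow (p := -a.re)).mpr (by linarith)).comp_injective
      Nat.succ_injective
    refine h.congr fun n => ?_
    simp [Nat.succ_eq_add_one]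
  have hB : Summable (fun m : ℕ => ((m : ℝ) + 1) ^ (-b.re)) := by
    have h := ((Real.summable_nat_rpow (p := -b.re)).mpr (by linarith)).comp_injective
      Nat.succ_injective
    refine h.congr fun n => ?_
    simp [Nat.succ_eq_add_one]
  have hprod : Summable (fun p : ℕ × ℕ =>
      ((p.1 : ℝ) + 1) ^ (-a.re) * ((p.2 : ℝ) + 1) ^ (-b.re)) :=
    hA.mul_of_nonneg hB (fun _ => Real.rpow_nonneg (by positivity) _)
      (fun _ => Real.rpow_nonneg (by positivity) _)
  refine Summable.of_nonneg_of_le (fun _ => norm_nonneg _) ?_ hprod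
  intro p
  have e1 : ((p.1 : ℂ) + 1) = (((p.1 : ℝ) + 1 : ℝ) : ℂ) := by push_cast; ring
  have e2 : ((p.2 : ℂ) + 1) = (((p.2 : ℝ) + 1 : ℝ) : ℂ) := by push_cast; ring
  have e3 : ((p.1 : ℂ) + (p.2 : ℂ) + 2) = (((p.1 : ℝ) + (p.2 : ℝ) + 2 : ℝ) : ℂ) := by
    push_cast; ring
  rw [e1, e2, e3, norm_mul, norm_mul,
    norm_cpow_eq_rpow_re_of_pos (x := (p.1 : ℝ) + 1) (by positivity),
    norm_cpow_eq_rpow_re_of_pos (x := (p.2 : ℝ) + 1) (by positivity),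
    norm_cpow_eq_rpow_re_of_pos (x := (p.1 : ℝ) + (p.2 : ℝ) + 2) (by positivity)]
  simp only [neg_re]
  have h3 : ((p.1 : ℝ) + (p.2 : ℝ) + 2) ^ (-c.re) ≤ 1 :=
    Real.rpow_le_one_of_one_le_of_nonpos
      (by have := Nat.cast_nonneg (α := ℝ) p.1; have := Nat.cast_nonneg (α := ℝ) p.2; linarith)
      (by linarith)
  calc ((p.1:ℝ)+1) ^ (-a.re) * ((p.2:ℝ)+1) ^ (-b.re) * ((p.1:ℝ)+(p.2:ℝ)+2) ^ (-c.re)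
      ≤ ((p.1:ℝ)+1) ^ (-a.re) * ((p.2:ℝ)+1) ^ (-b.re) * 1 := by
        exact mul_le_mul_of_nonneg_left h3
          (mul_nonneg (Real.rpow_nonneg (by positivity) _) (Real.rpow_nonneg (by positivity) _))
    _ = _ := by ring


/-- The Mordell–Tornheim double zeta-function
`ζ_{MT,2}(a,b,c) = ∑_{m,n ≥ 1} m^{-a} n^{-b} (m+n)^{-c}`. -/
noncomputable def mordellTornheim2 (a b c : ℂ) : ℂ :=
  ∑' p : ℕ × ℕ,
    ((p.1 : ℂ) + 1) ^ (-a) * ((p.2 : ℂ) + 1) ^ (-b) *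
      ((p.1 : ℂ) + (p.2 : ℂ) + 2) ^ (-c)

/-- Identity (4.6) for the Mordell–Tornheim double zeta-function (coefficient
of `ab` in the generating function of Example 4.2). -/
theorem mordellTornheim2_identity_ab (s₁ s₂ s₃ : ℂ)
    (h₁ : 3 < s₁.re) (h₂ : 3 < s₂.re) (h₃ : 3 < s₃.re) :
    (s₃ * (s₃ + 1) - 2 * s₁ * s₃ - 2 * s₂ * s₃ + 2 * s₁ * s₂) *
        mordellTornheim2 s₁ s₂ s₃
      + s₃ * (s₁ + 2 * s₂ - 2 * s₃ - 2) * mordellTornheim2 (s₁ - 1) s₂ (s₃ + 1)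
      + s₃ * (2 * s₁ + s₂ - 2 * s₃ - 2) * mordellTornheim2 s₁ (s₂ - 1) (s₃ + 1)
      + s₁ * s₃ * mordellTornheim2 (s₁ + 1) (s₂ - 2) (s₃ + 1)
      + s₂ * s₃ * mordellTornheim2 (s₁ - 2) (s₂ + 1) (s₃ + 1)
      + s₁ * (s₂ - 2 * s₃) * mordellTornheim2 (s₁ + 1) (s₂ - 1) s₃
      + s₂ * (s₁ - 2 * s₃) * mordellTornheim2 (s₁ - 1) (s₂ + 1) s₃
      - s₁ * (2 * s₂ - s₃) * mordellTornheim2 (s₁ + 1) s₂ (s₃ - 1)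
      - s₂ * (2 * s₁ - s₃) * mordellTornheim2 s₁ (s₂ + 1) (s₃ - 1)
      + s₃ * (s₃ + 1) * mordellTornheim2 (s₁ - 2) s₂ (s₃ + 2)
      + s₃ * (s₃ + 1) * mordellTornheim2 s₁ (s₂ - 2) (s₃ + 2)
      + s₁ * s₂ * mordellTornheim2 (s₁ + 1) (s₂ + 1) (s₃ - 2)
      + 2 * s₃ * (s₃ + 1) * mordellTornheim2 (s₁ - 1) (s₂ - 1) (s₃ + 2) = 0 := by

  have hterm : ∀ p : ℕ × ℕ,
        (s₃ * (s₃ + 1) - 2 * s₁ * s₃ - 2 * s₂ * s₃ + 2 * s₁ * s₂) * (((p.1 : ℂ) + 1) ^ (-s₁) * ((p.2 : ℂ) + 1) ^ (-s₂) * ((p.1 : ℂ) + (p.2 : ℂ) + 2) ^ (-s₃))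
        + (s₃ * (s₁ + 2 * s₂ - 2 * s₃ - 2)) * (((p.1 : ℂ) + 1) ^ (-(s₁ - 1)) * ((p.2 : ℂ) + 1) ^ (-s₂) * ((p.1 : ℂ) + (p.2 : ℂ) + 2) ^ (-(s₃ + 1)))
        + (s₃ * (2 * s₁ + s₂ - 2 * s₃ - 2)) * (((p.1 : ℂ) + 1) ^ (-s₁) * ((p.2 : ℂ) + 1) ^ (-(s₂ - 1)) * ((p.1 : ℂ) + (p.2 : ℂ) + 2) ^ (-(s₃ + 1)))
        + (s₁ * s₃) * (((p.1 : ℂ) + 1) ^ (-(s₁ + 1)) * ((p.2 : ℂ) + 1) ^ (-(s₂ - 2)) * ((p.1 : ℂ) + (p.2 : ℂ) + 2) ^ (-(s₃ + 1)))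
        + (s₂ * s₃) * (((p.1 : ℂ) + 1) ^ (-(s₁ - 2)) * ((p.2 : ℂ) + 1) ^ (-(s₂ + 1)) * ((p.1 : ℂ) + (p.2 : ℂ) + 2) ^ (-(s₃ + 1)))
        + (s₁ * (s₂ - 2 * s₃)) * (((p.1 : ℂ) + 1) ^ (-(s₁ + 1)) * ((p.2 : ℂ) + 1) ^ (-(s₂ - 1)) * ((p.1 : ℂ) + (p.2 : ℂ) + 2) ^ (-s₃))
        + (s₂ * (s₁ - 2 * s₃)) * (((p.1 : ℂ) + 1) ^ (-(s₁ - 1)) * ((p.2 : ℂ) + 1) ^ (-(s₂ + 1)) * ((p.1 : ℂ) + (p.2 : ℂ) + 2) ^ (-s₃))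
        - (s₁ * (2 * s₂ - s₃)) * (((p.1 : ℂ) + 1) ^ (-(s₁ + 1)) * ((p.2 : ℂ) + 1) ^ (-s₂) * ((p.1 : ℂ) + (p.2 : ℂ) + 2) ^ (-(s₃ - 1)))
        - (s₂ * (2 * s₁ - s₃)) * (((p.1 : ℂ) + 1) ^ (-s₁) * ((p.2 : ℂ) + 1) ^ (-(s₂ + 1)) * ((p.1 : ℂ) + (p.2 : ℂ) + 2) ^ (-(s₃ - 1)))
        + (s₃ * (s₃ + 1)) * (((p.1 : ℂ) + 1) ^ (-(s₁ - 2)) * ((p.2 : ℂ) + 1) ^ (-s₂) * ((p.1 : ℂ) + (p.2 : ℂ) + 2) ^ (-(s₃ + 2)))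
        + (s₃ * (s₃ + 1)) * (((p.1 : ℂ) + 1) ^ (-s₁) * ((p.2 : ℂ) + 1) ^ (-(s₂ - 2)) * ((p.1 : ℂ) + (p.2 : ℂ) + 2) ^ (-(s₃ + 2)))
        + (s₁ * s₂) * (((p.1 : ℂ) + 1) ^ (-(s₁ + 1)) * ((p.2 : ℂ) + 1) ^ (-(s₂ + 1)) * ((p.1 : ℂ) + (p.2 : ℂ) + 2) ^ (-(s₃ - 2)))
        + (2 * s₃ * (s₃ + 1)) * (((p.1 : ℂ) + 1) ^ (-(s₁ - 1)) * ((p.2 : ℂ) + 1) ^ (-(s₂ - 1)) * ((p.1 : ℂ) + (p.2 : ℂ) + 2) ^ (-(s₃ + 2)))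
        = 0 := by
    intro p
    have hx : ((p.1 : ℂ) + 1) ≠ 0 := by
      have h := Nat.cast_ne_zero (R := ℂ).mpr (Nat.succ_ne_zero p.1)
      push_cast at h
      exact h
    have hy : ((p.2 : ℂ) + 1) ≠ 0 := by
      have h := Nat.cast_ne_zero (R := ℂ).mpr (Nat.succ_ne_zero p.2)
      push_cast at h
      exact h
    have hz : ((p.1 : ℂ) + 1) + ((p.2 : ℂ) + 1) ≠ 0 := by
      have h := Nat.cast_ne_zero (R := ℂ).mpr (show p.1 + p.2 + 2 ≠ 0 by omega)
      push_cast at h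
      intro hc
      exact h (by linear_combination hc)
    have e : ((p.1 : ℂ) + (p.2 : ℂ) + 2) = ((p.1 : ℂ) + 1) + ((p.2 : ℂ) + 1) := by ring
    rw [e]
    exact key s₁ s₂ s₃ ((p.1 : ℂ) + 1) ((p.2 : ℂ) + 1) hx hy hz
  have H0 : HasSum (fun p : ℕ × ℕ =>
      ((p.1 : ℂ) + 1) ^ (-s₁) * ((p.2 : ℂ) + 1) ^ (-s₂) *
        ((p.1 : ℂ) + (p.2 : ℂ) + 2) ^ (-s₃)) (mordellTornheim2 s₁ s₂ s₃) :=
    (MT_summable (by first | linarith | (simp only [Complex.add_re, Complex.sub_re, Complex.one_re, Complex.re_ofNat]; linarith)) (by first | linarith | (simp only [Complex.add_re, Complex.sub_re, Complex.one_re, Complex.re_ofNat]; linarith)) (by first | linarith | (simp only [Complex.add_re, Complex.sub_re, Complex.one_re, Complex.re_ofNat]; linarith))).hasSum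
  have H1 : HasSum (fun p : ℕ × ℕ =>
      ((p.1 : ℂ) + 1) ^ (-(s₁ - 1)) * ((p.2 : ℂ) + 1) ^ (-s₂) *
        ((p.1 : ℂ) + (p.2 : ℂ) + 2) ^ (-(s₃ + 1))) (mordellTornheim2 (s₁ - 1) s₂ (s₃ + 1)) :=
    (MT_summable (by first | linarith | (simp only [Complex.add_re, Complex.sub_re, Complex.one_re, Complex.re_ofNat]; linarith)) (by first | linarith | (simp only [Complex.add_re, Complex.sub_re, Complex.one_re, Complex.re_ofNat]; linarith)) (by first | linarith | (simp only [Complex.add_re, Complex.sub_re, Complex.one_re, Complex.re_ofNat]; linarith))).hasSum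
  have H2 : HasSum (fun p : ℕ × ℕ =>
      ((p.1 : ℂ) + 1) ^ (-s₁) * ((p.2 : ℂ) + 1) ^ (-(s₂ - 1)) *
        ((p.1 : ℂ) + (p.2 : ℂ) + 2) ^ (-(s₃ + 1))) (mordellTornheim2 s₁ (s₂ - 1) (s₃ + 1)) :=
    (MT_summable (by first | linarith | (simp only [Complex.add_re, Complex.sub_re, Complex.one_re, Complex.re_ofNat]; linarith)) (by first | linarith | (simp only [Complex.add_re, Complex.sub_re, Complex.one_re, Complex.re_ofNat]; linarith)) (by first | linarith | (simp only [Complex.add_re, Complex.sub_re, Complex.one_re, Complex.re_ofNat]; linarith))).hasSum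
  have H3 : HasSum (fun p : ℕ × ℕ =>
      ((p.1 : ℂ) + 1) ^ (-(s₁ + 1)) * ((p.2 : ℂ) + 1) ^ (-(s₂ - 2)) *
        ((p.1 : ℂ) + (p.2 : ℂ) + 2) ^ (-(s₃ + 1))) (mordellTornheim2 (s₁ + 1) (s₂ - 2) (s₃ + 1)) :=
    (MT_summable (by first | linarith | (simp only [Complex.add_re, Complex.sub_re, Complex.one_re, Complex.re_ofNat]; linarith)) (by first | linarith | (simp only [Complex.add_re, Complex.sub_re, Complex.one_re, Complex.re_ofNat]; linarith)) (by first | linarith | (simp only [Complex.add_re, Complex.sub_re, Complex.one_re, Complex.re_ofNat]; linarith))).hasSum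
  have H4 : HasSum (fun p : ℕ × ℕ =>
      ((p.1 : ℂ) + 1) ^ (-(s₁ - 2)) * ((p.2 : ℂ) + 1) ^ (-(s₂ + 1)) *
        ((p.1 : ℂ) + (p.2 : ℂ) + 2) ^ (-(s₃ + 1))) (mordellTornheim2 (s₁ - 2) (s₂ + 1) (s₃ + 1)) :=
    (MT_summable (by first | linarith | (simp only [Complex.add_re, Complex.sub_re, Complex.one_re, Complex.re_ofNat]; linarith)) (by first | linarith | (simp only [Complex.add_re, Complex.sub_re, Complex.one_re, Complex.re_ofNat]; linarith)) (by first | linarith | (simp only [Complex.add_re, Complex.sub_re, Complex.one_re, Complex.re_ofNat]; linarith))).hasSum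
  have H5 : HasSum (fun p : ℕ × ℕ =>
      ((p.1 : ℂ) + 1) ^ (-(s₁ + 1)) * ((p.2 : ℂ) + 1) ^ (-(s₂ - 1)) *
        ((p.1 : ℂ) + (p.2 : ℂ) + 2) ^ (-s₃)) (mordellTornheim2 (s₁ + 1) (s₂ - 1) s₃) :=
    (MT_summable (by first | linarith | (simp only [Complex.add_re, Complex.sub_re, Complex.one_re, Complex.re_ofNat]; linarith)) (by first | linarith | (simp only [Complex.add_re, Complex.sub_re, Complex.one_re, Complex.re_ofNat]; linarith)) (by first | linarith | (simp only [Complex.add_re, Complex.sub_re, Complex.one_re, Complex.re_ofNat]; linarith))).hasSum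
  have H6 : HasSum (fun p : ℕ × ℕ =>
      ((p.1 : ℂ) + 1) ^ (-(s₁ - 1)) * ((p.2 : ℂ) + 1) ^ (-(s₂ + 1)) *
        ((p.1 : ℂ) + (p.2 : ℂ) + 2) ^ (-s₃)) (mordellTornheim2 (s₁ - 1) (s₂ + 1) s₃) :=
    (MT_summable (by first | linarith | (simp only [Complex.add_re, Complex.sub_re, Complex.one_re, Complex.re_ofNat]; linarith)) (by first | linarith | (simp only [Complex.add_re, Complex.sub_re, Complex.one_re, Complex.re_ofNat]; linarith)) (by first | linarith | (simp only [Complex.add_re, Complex.sub_re, Complex.one_re, Complex.re_ofNat]; linarith))).hasSum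
  have H7 : HasSum (fun p : ℕ × ℕ =>
      ((p.1 : ℂ) + 1) ^ (-(s₁ + 1)) * ((p.2 : ℂ) + 1) ^ (-s₂) *
        ((p.1 : ℂ) + (p.2 : ℂ) + 2) ^ (-(s₃ - 1))) (mordellTornheim2 (s₁ + 1) s₂ (s₃ - 1)) :=
    (MT_summable (by first | linarith | (simp only [Complex.add_re, Complex.sub_re, Complex.one_re, Complex.re_ofNat]; linarith)) (by first | linarith | (simp only [Complex.add_re, Complex.sub_re, Complex.one_re, Complex.re_ofNat]; linarith)) (by first | linarith | (simp only [Complex.add_re, Complex.sub_re, Complex.one_re, Complex.re_ofNat]; linarith))).hasSum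
  have H8 : HasSum (fun p : ℕ × ℕ =>
      ((p.1 : ℂ) + 1) ^ (-s₁) * ((p.2 : ℂ) + 1) ^ (-(s₂ + 1)) *
        ((p.1 : ℂ) + (p.2 : ℂ) + 2) ^ (-(s₃ - 1))) (mordellTornheim2 s₁ (s₂ + 1) (s₃ - 1)) :=
    (MT_summable (by first | linarith | (simp only [Complex.add_re, Complex.sub_re, Complex.one_re, Complex.re_ofNat]; linarith)) (by first | linarith | (simp only [Complex.add_re, Complex.sub_re, Complex.one_re, Complex.re_ofNat]; linarith)) (by first | linarith | (simp only [Complex.add_re, Complex.sub_re, Complex.one_re, Complex.re_ofNat]; linarith))).hasSum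
  have H9 : HasSum (fun p : ℕ × ℕ =>
      ((p.1 : ℂ) + 1) ^ (-(s₁ - 2)) * ((p.2 : ℂ) + 1) ^ (-s₂) *
        ((p.1 : ℂ) + (p.2 : ℂ) + 2) ^ (-(s₃ + 2))) (mordellTornheim2 (s₁ - 2) s₂ (s₃ + 2)) :=
    (MT_summable (by first | linarith | (simp only [Complex.add_re, Complex.sub_re, Complex.one_re, Complex.re_ofNat]; linarith)) (by first | linarith | (simp only [Complex.add_re, Complex.sub_re, Complex.one_re, Complex.re_ofNat]; linarith)) (by first | linarith | (simp only [Complex.add_re, Complex.sub_re, Complex.one_re, Complex.re_ofNat]; linarith))).hasSum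
  have H10 : HasSum (fun p : ℕ × ℕ =>
      ((p.1 : ℂ) + 1) ^ (-s₁) * ((p.2 : ℂ) + 1) ^ (-(s₂ - 2)) *
        ((p.1 : ℂ) + (p.2 : ℂ) + 2) ^ (-(s₃ + 2))) (mordellTornheim2 s₁ (s₂ - 2) (s₃ + 2)) :=
    (MT_summable (by first | linarith | (simp only [Complex.add_re, Complex.sub_re, Complex.one_re, Complex.re_ofNat]; linarith)) (by first | linarith | (simp only [Complex.add_re, Complex.sub_re, Complex.one_re, Complex.re_ofNat]; linarith)) (by first | linarith | (simp only [Complex.add_re, Complex.sub_re, Complex.one_re, Complex.re_ofNat]; linarith))).hasSum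
  have H11 : HasSum (fun p : ℕ × ℕ =>
      ((p.1 : ℂ) + 1) ^ (-(s₁ + 1)) * ((p.2 : ℂ) + 1) ^ (-(s₂ + 1)) *
        ((p.1 : ℂ) + (p.2 : ℂ) + 2) ^ (-(s₃ - 2))) (mordellTornheim2 (s₁ + 1) (s₂ + 1) (s₃ - 2)) :=
    (MT_summable (by first | linarith | (simp only [Complex.add_re, Complex.sub_re, Complex.one_re, Complex.re_ofNat]; linarith)) (by first | linarith | (simp only [Complex.add_re, Complex.sub_re, Complex.one_re, Complex.re_ofNat]; linarith)) (by first | linarith | (simp only [Complex.add_re, Complex.sub_re, Complex.one_re, Complex.re_ofNat]; linarith))).hasSum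
  have H12 : HasSum (fun p : ℕ × ℕ =>
      ((p.1 : ℂ) + 1) ^ (-(s₁ - 1)) * ((p.2 : ℂ) + 1) ^ (-(s₂ - 1)) *
        ((p.1 : ℂ) + (p.2 : ℂ) + 2) ^ (-(s₃ + 2))) (mordellTornheim2 (s₁ - 1) (s₂ - 1) (s₃ + 2)) :=
    (MT_summable (by first | linarith | (simp only [Complex.add_re, Complex.sub_re, Complex.one_re, Complex.re_ofNat]; linarith)) (by first | linarith | (simp only [Complex.add_re, Complex.sub_re, Complex.one_re, Complex.re_ofNat]; linarith)) (by first | linarith | (simp only [Complex.add_re, Complex.sub_re, Complex.one_re, Complex.re_ofNat]; linarith))).hasSum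
  have H := ((((((((((((H0.mul_left (s₃ * (s₃ + 1) - 2 * s₁ * s₃ - 2 * s₂ * s₃ + 2 * s₁ * s₂)).add (H1.mul_left (s₃ * (s₁ + 2 * s₂ - 2 * s₃ - 2)))).add (H2.mul_left (s₃ * (2 * s₁ + s₂ - 2 * s₃ - 2)))).add (H3.mul_left (s₁ * s₃))).add (H4.mul_left (s₂ * s₃))).add (H5.mul_left (s₁ * (s₂ - 2 * s₃)))).add (H6.mul_left (s₂ * (s₁ - 2 * s₃)))).sub (H7.mul_left (s₁ * (2 * s₂ - s₃)))).sub (H8.mul_left (s₂ * (2 * s₁ - s₃)))).add (H9.mul_left (s₃ * (s₃ + 1)))).add (H10.mul_left (s₃ * (s₃ + 1)))).add (H11.mul_left (s₁ * s₂))).add (H12.mul_left (2 * s₃ * (s₃ + 1)))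
  simp only [hterm] at H
  exact H.unique hasSum_zero
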